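/- There exists an index i* ∈ ℕ with i* ≤ (f(w_0) − f°)/(c₂ μ²) such that E ‖∇f(w_{i*})‖² ≤ 2μ c₂ / c₁. (This is the paper's Theorem 2 in its abstract form: under a per-iteration descent relation with drift constant c₂ = O(1) and gradient coefficient c₁, the iterates reach an O(μ)-mean-square-stationary point of f in at most O(1/μ²) iterations.) -/

import Mathlib

open MeasureTheory

/-- **Reaching an O(μ)-mean-square-stationary point (Theorem 2 of Dif-MAML, abstract form).**
Under a per-iteration descent relation, there is an index `i* ≤ (f(w₀) − f°)/(c₂ μ²)` with
`E‖∇f(w_{i*})‖² ≤ 2μc₂/c₁`. -/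
theorem stationary_point_in_O_mu_sq_iterations
    (M : ℕ) (μ c₁ c₂ flow : ℝ) (hμ : 0 < μ) (hc₁ : 0 < c₁) (hc₂ : 0 < c₂)
    (f : EuclideanSpace ℝ (Fin M) → ℝ)
    (hdiff : Differentiable ℝ f)
    (hbelow : ∀ u, flow ≤ f u)
    {Ω : Type*} [MeasurableSpace Ω] (P : Measure Ω) [IsProbabilityMeasure P]
    (w : ℕ → Ω → EuclideanSpace ℝ (Fin M)) (w0 : EuclideanSpace ℝ (Fin M))
    (hw0 : ∀ ω, w 0 ω = w0)
    (hfint : ∀ i, Integrable (fun ω => f (w i ω)) P)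
    (hgint : ∀ i, Integrable (fun ω => ‖gradient f (w i ω)‖ ^ 2) P)
    (hdescent : ∀ i, ∫ ω, f (w (i + 1) ω) ∂P
      ≤ (∫ ω, f (w i ω) ∂P) - μ * c₁ * (∫ ω, ‖gradient f (w i ω)‖ ^ 2 ∂P) + μ ^ 2 * c₂) :
    ∃ istar : ℕ, (istar : ℝ) ≤ (f w0 - flow) / (c₂ * μ ^ 2)
      ∧ ∫ ω, ‖gradient f (w istar ω)‖ ^ 2 ∂P ≤ 2 * μ * c₂ / c₁ := by
  by_contra hcon
  push_neg at hcon
  set B := (f w0 - flow) / (c₂ * μ ^ 2) with hB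
  have hμ2 : (0:ℝ) < c₂ * μ ^ 2 := by positivity
  have hB0 : 0 ≤ B := div_nonneg (by linarith [hbelow w0]) hμ2.le
  set N := Nat.floor B + 1 with hN
  have hNgt : B < (N : ℝ) := by
    have := Nat.lt_floor_add_one B
    push_cast [hN]
    linarith
  have key : ∀ n, n ≤ N → ∫ ω, f (w n ω) ∂P ≤ f w0 - n * (μ ^ 2 * c₂) := by
    intro n
    induction n with
    | zero =>
      intro _
      simp [hw0]
    | succ k ih =>
      intro hn
      have hk : k ≤ N := Nat.le_of_succ_le hn
      have hkB : (k : ℝ) ≤ B := by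
        have hk' : k ≤ Nat.floor B := Nat.lt_succ_iff.mp hn
        exact le_trans (Nat.cast_le.mpr hk') (Nat.floor_le hB0)
      have hgrad := hcon k hkB
      have h1 : μ * c₁ * (2 * μ * c₂ / c₁) = 2 * (μ ^ 2 * c₂) := by
        field_simp
      have h2 : μ * c₁ * (2 * μ * c₂ / c₁)
          ≤ μ * c₁ * ∫ ω, ‖gradient f (w k ω)‖ ^ 2 ∂P :=
        mul_le_mul_of_nonneg_left hgrad.le (by positivity)
      have h3 := hdescent k
      have h4 := ih hk
      have hcast : ((k + 1 : ℕ) : ℝ) = (k : ℝ) + 1 := by push_cast; ring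
      rw [hcast]
      linarith
  have hNb := key N le_rfl
  have hlow : flow ≤ ∫ ω, f (w N ω) ∂P := by
    have := integral_mono (integrable_const flow) (hfint N) (fun ω => hbelow (w N ω))
    simpa using this
  have hNle : (N : ℝ) ≤ B := by
    rw [hB, le_div_iff₀ hμ2]
    nlinarith
  linarith
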